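/- If H is an empty graph, or a graph whose components are isolated vertices together with at most one non-trivial complete graph, or isolated vertices together with exactly two non-trivial complete graphs, then ω(H) = ψ(H). -/

import Mathlib

open SimpleGraph

/-- A coloring of the vertices with colors `0, ..., k-1` which uses all `k` colors and such
that every pair of distinct colors appears on the endpoints of some edge. -/
def IsCompleteColoring {V : Type*} (G : SimpleGraph V) (c : V → ℕ) (k : ℕ) : Prop :=
  (∀ v, c v < k) ∧ (∀ i, i < k → ∃ v, c v = i) ∧
    ∀ i j, i < k → j < k → i ≠ j → ∃ u w, G.Adj u w ∧ c u = i ∧ c w = j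

/-- A proper coloring: adjacent vertices get distinct colors. -/
def IsProperColoring {V : Type*} (G : SimpleGraph V) (c : V → ℕ) : Prop :=
  ∀ u w, G.Adj u w → c u ≠ c w

/-- A Grundy coloring with `k` colors: proper, uses all `k` colors, and every vertex of
color `j` has, for each `i < j`, a neighbor colored `i`. -/
def IsGrundyColoring {V : Type*} (G : SimpleGraph V) (c : V → ℕ) (k : ℕ) : Prop :=
  (∀ v, c v < k) ∧ (∀ i, i < k → ∃ v, c v = i) ∧ IsProperColoring G c ∧
    ∀ v i, i < c v → ∃ u, G.Adj u v ∧ c u = i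

/-- The pseudoachromatic number `ψ`. -/
noncomputable def pseudoachromaticNumber {V : Type*} (G : SimpleGraph V) : ℕ :=
  sSup {k | ∃ c, IsCompleteColoring G c k}

/-- The achromatic number `α`. -/
noncomputable def achromaticNumber {V : Type*} (G : SimpleGraph V) : ℕ :=
  sSup {k | ∃ c, IsCompleteColoring G c k ∧ IsProperColoring G c}

/-- The Grundy number `Γ`. -/
noncomputable def grundyNumber {V : Type*} (G : SimpleGraph V) : ℕ :=
  sSup {k | ∃ c, IsGrundyColoring G c k}

/-- The chromatic number `χ` (as a natural number). -/
noncomputable def chromNumber {V : Type*} (G : SimpleGraph V) : ℕ :=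
  sInf {k | ∃ c : V → ℕ, (∀ v, c v < k) ∧ IsProperColoring G c}

/-- The clique number `ω`. -/
noncomputable def cliqueNumber {V : Type*} (G : SimpleGraph V) : ℕ :=
  sSup {n | ∃ s : Finset V, G.IsNClique n s}

/-- `G` is `H`-free: no induced subgraph of `G` is isomorphic to `H`. -/
def GraphFree {V W : Type*} (G : SimpleGraph V) (H : SimpleGraph W) : Prop :=
  ∀ s : Set V, IsEmpty ((G.induce s) ≃g H)

/-- `G` is `ωψ`-perfect. -/
def OmegaPsiPerfect {V : Type*} (G : SimpleGraph V) : Prop :=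
  ∀ s : Set V, cliqueNumber (G.induce s) = pseudoachromaticNumber (G.induce s)

/-- `G` is `χψ`-perfect. -/
def ChiPsiPerfect {V : Type*} (G : SimpleGraph V) : Prop :=
  ∀ s : Set V, chromNumber (G.induce s) = pseudoachromaticNumber (G.induce s)

/-- The path on 4 vertices. -/
def pathP4 : SimpleGraph (Fin 4) :=
  SimpleGraph.fromRel (fun a b => (b : ℕ) = (a : ℕ) + 1)

/-- The cycle on 4 vertices. -/
def cycleC4 : SimpleGraph (Fin 4) :=
  SimpleGraph.fromRel (fun a b => b = a + 1)

/-- The disjoint union of a path on 3 vertices and an edge. -/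
def graphP3K2 : SimpleGraph (Fin 5) :=
  SimpleGraph.fromRel (fun a b => (a, b) ∈ [((0 : Fin 5), (1 : Fin 5)), (1, 2), (3, 4)])

/-- The disjoint union of three edges. -/
def graph3K2 : SimpleGraph (Fin 6) :=
  SimpleGraph.fromRel (fun a b => (a, b) ∈ [((0 : Fin 6), (1 : Fin 6)), (2, 3), (4, 5)])

/-- The join of two graphs. -/
def graphJoin {V W : Type*} (G : SimpleGraph V) (H : SimpleGraph W) : SimpleGraph (V ⊕ W) :=
  SimpleGraph.fromRel (fun x y =>
    match x, y with
    | Sum.inl a, Sum.inl b => G.Adj a b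
    | Sum.inr a, Sum.inr b => H.Adj a b
    | _, _ => True)

/-- The disjoint union of two graphs. -/
def graphSum {V W : Type*} (G : SimpleGraph V) (H : SimpleGraph W) : SimpleGraph (V ⊕ W) :=
  SimpleGraph.fromRel (fun x y =>
    match x, y with
    | Sum.inl a, Sum.inl b => G.Adj a b
    | Sum.inr a, Sum.inr b => H.Adj a b
    | _, _ => False)

/-- The disjoint union of a family of graphs. -/
def graphSigma {ι : Type} {U : ι → Type} (f : ∀ i, SimpleGraph (U i)) :
    SimpleGraph (Σ i, U i) :=
  SimpleGraph.fromRel (fun x y => ∃ h : x.1 = y.1, (f y.1).Adj (h ▸ x.2) y.2)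

lemma psi_bddAbove_aux {W : Type*} [Fintype W] (H : SimpleGraph W) :
    ∀ k ∈ {k | ∃ c, IsCompleteColoring H c k}, k ≤ Fintype.card W := by
  rintro k ⟨c, hlt, hall, -⟩
  choose f hf using hall
  have hinj : Function.Injective (fun i : Fin k => f i i.2) := by
    intro i j hij
    exact Fin.ext (by simpa only [hf] using congrArg c hij)
  calc k = Fintype.card (Fin k) := (Fintype.card_fin k).symm
    _ ≤ Fintype.card W := Fintype.card_le_of_injective _ hinj

lemma omega_bddAbove_aux {W : Type*} [Fintype W] (H : SimpleGraph W) :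
    BddAbove {n | ∃ s : Finset W, H.IsNClique n s} := by
  refine ⟨Fintype.card W, ?_⟩
  rintro n ⟨s, hs⟩
  rw [← hs.2]
  exact Finset.card_le_univ s

lemma clique_of_colors_aux {W : Type*} [Fintype W] (H : SimpleGraph W) {A : Set W}
    (hA : ∀ u ∈ A, ∀ v ∈ A, u ≠ v → H.Adj u v) {k : ℕ} (c : W → ℕ)
    (hall : ∀ i, i < k → ∃ v ∈ A, c v = i) :
    k ∈ {n | ∃ s : Finset W, H.IsNClique n s} := by
  classical
  choose f hfA hfc using hall
  have hginj : Function.Injective (fun i : Fin k => f i i.2) := by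
    intro i j hij
    exact Fin.ext (by simpa only [hfc] using congrArg c hij)
  refine ⟨Finset.univ.image (fun i : Fin k => f i i.2), ?_, ?_⟩
  · intro u hu w hw huw
    simp only [Finset.coe_image, Set.mem_image, Finset.coe_univ, Set.mem_univ, true_and] at hu hw
    obtain ⟨i, rfl⟩ := hu
    obtain ⟨j, rfl⟩ := hw
    exact hA _ (hfA i i.2) _ (hfA j j.2) huw
  · rw [Finset.card_image_of_injective _ hginj, Finset.card_univ, Fintype.card_fin]

lemma omega_le_psi_aux {W : Type*} [Fintype W] (H : SimpleGraph W) :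
    cliqueNumber H ≤ pseudoachromaticNumber H := by
  apply csSup_le'
  rintro n ⟨s, hs⟩
  rcases Nat.eq_zero_or_pos n with rfl | hn
  · exact Nat.zero_le _
  apply le_csSup ⟨Fintype.card W, fun k hk => psi_bddAbove_aux H k hk⟩
  classical
  obtain ⟨hclique, hcard⟩ := hs
  subst hcard
  set e := s.equivFin with he
  set c : W → ℕ := fun v => if h : v ∈ s then (e ⟨v, h⟩ : ℕ) else 0 with hc
  have key : ∀ i : Fin s.card, c ↑(e.symm i) = i := by
    intro i
    have h : ↑(e.symm i) ∈ s := (e.symm i).2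
    simp only [hc, dif_pos h, Subtype.coe_eta, Equiv.apply_symm_apply]
  refine ⟨c, fun v => ?_, fun i hi => ⟨↑(e.symm ⟨i, hi⟩), key ⟨i, hi⟩⟩,
    fun i j hi hj hij => ?_⟩
  · by_cases h : v ∈ s
    · simp only [hc, dif_pos h]; exact (e ⟨v, h⟩).2
    · simp only [hc, dif_neg h]; exact hn
  · refine ⟨↑(e.symm ⟨i, hi⟩), ↑(e.symm ⟨j, hj⟩), ?_, key ⟨i, hi⟩, key ⟨j, hj⟩⟩
    have hne : ((e.symm ⟨i, hi⟩ : s) : W) ≠ ↑(e.symm ⟨j, hj⟩) := by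
      intro h
      exact hij (by simpa using e.symm.injective (Subtype.ext h))
    exact hclique (Finset.mem_coe.mpr (e.symm ⟨i, hi⟩).2)
      (Finset.mem_coe.mpr (e.symm ⟨j, hj⟩).2) hne

lemma psi_le_omega_aux {W : Type*} [Fintype W] (H : SimpleGraph W) (A B : Set W)
    (hA : ∀ u ∈ A, ∀ v ∈ A, u ≠ v → H.Adj u v)
    (hB : ∀ u ∈ B, ∀ v ∈ B, u ≠ v → H.Adj u v)
    (hcov : ∀ u v : W, H.Adj u v → (u ∈ A ∧ v ∈ A) ∨ (u ∈ B ∧ v ∈ B)) :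
    pseudoachromaticNumber H ≤ cliqueNumber H := by
  apply csSup_le'
  rintro k ⟨c, hlt, hall, hpair⟩
  rcases Nat.eq_zero_or_pos k with rfl | hk1
  · exact Nat.zero_le _
  rcases eq_or_lt_of_le (show 1 ≤ k from hk1) with hk1 | hk2
  · -- k = 1
    obtain ⟨v, -⟩ := hall 0 hk1.le
    refine le_csSup (omega_bddAbove_aux H) ⟨{v}, ?_, by simp [← hk1]⟩
    simp [SimpleGraph.IsClique]
  · -- k ≥ 2
    have hclaim : (∀ i, i < k → ∃ v ∈ A, c v = i) ∨ (∀ i, i < k → ∃ v ∈ B, c v = i) := by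
      by_contra h
      push_neg at h
      obtain ⟨⟨i, hi, hiA⟩, ⟨j, hj, hjB⟩⟩ := h
      by_cases hij : i = j
      · subst hij
        set j' : ℕ := if i = 0 then 1 else 0 with hj'
        have hj'k : j' < k := by
          rcases eq_or_ne i 0 with h0 | h0 <;> simp only [hj', h0, if_true, if_false] <;> omega
        have hne : i ≠ j' := by
          rcases eq_or_ne i 0 with h0 | h0 <;> simp [hj', h0]
        obtain ⟨u, w, hadj, hcu, -⟩ := hpair i j' hi hj'k hne
        rcases hcov u w hadj with ⟨huA, -⟩ | ⟨huB, -⟩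
        · exact hiA u huA hcu
        · exact hjB u huB hcu
      · obtain ⟨u, w, hadj, hcu, hcw⟩ := hpair i j hi hj hij
        rcases hcov u w hadj with ⟨huA, -⟩ | ⟨-, hwB⟩
        · exact hiA u huA hcu
        · exact hjB w hwB hcw
    rcases hclaim with hcase | hcase
    · exact le_csSup (omega_bddAbove_aux H) (clique_of_colors_aux H hA c hcase)
    · exact le_csSup (omega_bddAbove_aux H) (clique_of_colors_aux H hB c hcase)

theorem stmt_8 {W : Type*} [Fintype W] (H : SimpleGraph W)
    (hstruct :
      (∀ u v : W, ¬ H.Adj u v) ∨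
      (∃ A : Set W, (∀ u ∈ A, ∀ v ∈ A, u ≠ v → H.Adj u v) ∧
        (∀ u v : W, H.Adj u v → u ∈ A ∧ v ∈ A)) ∨
      (∃ A B : Set W, Disjoint A B ∧ A.Nontrivial ∧ B.Nontrivial ∧
        (∀ u ∈ A, ∀ v ∈ A, u ≠ v → H.Adj u v) ∧
        (∀ u ∈ B, ∀ v ∈ B, u ≠ v → H.Adj u v) ∧
        (∀ u v : W, H.Adj u v → (u ∈ A ∧ v ∈ A) ∨ (u ∈ B ∧ v ∈ B)))) :
    cliqueNumber H = pseudoachromaticNumber H := by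
  refine le_antisymm (omega_le_psi_aux H) ?_
  rcases hstruct with hempty | ⟨A, hA, hcov⟩ | ⟨A, B, -, -, -, hA, hB, hcov⟩
  · exact psi_le_omega_aux H ∅ ∅ (by simp) (by simp)
      (fun u v h => absurd h (hempty u v))
  · exact psi_le_omega_aux H A A hA hA (fun u v h => Or.inl (hcov u v h))
  · exact psi_le_omega_aux H A B hA hB hcov
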